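/- arXiv:2011.08569 — 5 statements merged into one kernel-verified Lean document; each statement's English description precedes it below -/
import Mathlib

section
/- Let ρ > 0, let each g_i : ℝⁿ → ℝ be differentiable with ‖∇g_i(x) − ∇g_i(y)‖ ≤ L_{gi}‖x − y‖ and ‖∇g_i(x)‖ ≤ B_{gi} for all x, y ∈ ℝⁿ, and let (x*, λ*) ∈ ℝⁿ × ℝ^m satisfy λ* ≥ 0, g(x*) ≤ 0 and λ_i* g_i(x*) = 0 for all i (so that [ρ g_i(x*) + λ_i*]_+ = λ_i*). Then for all x ∈ ℝⁿ and λ ∈ ℝ^m, ‖∇_x U_ρ(x,λ) − ∇_x U_ρ(x*,λ*)‖ ≤ θ₁ ‖x − x*‖ + B_g ‖λ − λ*‖, where ∇_x U_ρ(x,λ) = Σ_{i=1}^m [ρ g_i(x)+λ_i]_+ ∇g_i(x), B_g = sqrt(Σ_i B_{gi}²), L_g = sqrt(Σ_i L_{gi}²), and θ₁ = ρ B_g² + L_g ‖λ*‖. -/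
/-- Cauchy–Schwarz for finite sums, square-root form. -/
lemma aux_cauchy_schwarz {m : ℕ} (f h : Fin m → ℝ) (hf : ∀ i, 0 ≤ f i) (hh : ∀ i, 0 ≤ h i) :
    ∑ i, f i * h i ≤ Real.sqrt (∑ i, f i ^ 2) * Real.sqrt (∑ i, h i ^ 2) := by
  have hnn : 0 ≤ ∑ i, f i * h i :=
    Finset.sum_nonneg fun i _ => mul_nonneg (hf i) (hh i)
  have h2 := Finset.sum_mul_sq_le_sq_mul_sq Finset.univ f h
  calc ∑ i, f i * h i = Real.sqrt ((∑ i, f i * h i) ^ 2) := (Real.sqrt_sq hnn).symm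
    _ ≤ Real.sqrt ((∑ i, f i ^ 2) * ∑ i, h i ^ 2) := Real.sqrt_le_sqrt h2
    _ = Real.sqrt (∑ i, f i ^ 2) * Real.sqrt (∑ i, h i ^ 2) :=
        Real.sqrt_mul (Finset.sum_nonneg fun i _ => sq_nonneg _) _

/-- Lipschitz-type bound for the `x`-gradient of the augmented penalty:
`‖∇ₓU_ρ(x,λ) − ∇ₓU_ρ(x*,λ*)‖ ≤ θ₁‖x − x*‖ + B_g‖λ − λ*‖` where
`θ₁ = ρ B_g² + L_g‖λ*‖`, at a point `(x*,λ*)` satisfying `λ* ≥ 0`, `g(x*) ≤ 0`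
and complementary slackness. -/
theorem augmented_penalty_gradient_x_bound {n m : ℕ} (ρ : ℝ) (hρ : 0 < ρ)
    (g : Fin m → EuclideanSpace ℝ (Fin n) → ℝ)
    (g' : Fin m → EuclideanSpace ℝ (Fin n) → EuclideanSpace ℝ (Fin n))
    (L B : Fin m → ℝ)
    (hg : ∀ i x, HasGradientAt (g i) (g' i x) x)
    (hgL : ∀ i x y, ‖g' i x - g' i y‖ ≤ L i * ‖x - y‖)
    (hgB : ∀ i x, ‖g' i x‖ ≤ B i)
    (xs : EuclideanSpace ℝ (Fin n)) (ls : EuclideanSpace ℝ (Fin m))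
    (hls : ∀ i, 0 ≤ ls i) (hgs : ∀ i, g i xs ≤ 0) (hcomp : ∀ i, ls i * g i xs = 0)
    (Bg Lg θ₁ : ℝ)
    (hBg : Bg = Real.sqrt (∑ i, (B i) ^ 2)) (hLg : Lg = Real.sqrt (∑ i, (L i) ^ 2))
    (hθ₁ : θ₁ = ρ * Bg ^ 2 + Lg * ‖ls‖) :
    ∀ (x : EuclideanSpace ℝ (Fin n)) (lam : EuclideanSpace ℝ (Fin m)),
      ‖(∑ i, max (ρ * g i x + lam i) 0 • g' i x) -
          ∑ i, max (ρ * g i xs + ls i) 0 • g' i xs‖ ≤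
        θ₁ * ‖x - xs‖ + Bg * ‖lam - ls‖ := by
  intro x lam
  have hB0 : ∀ i, 0 ≤ B i := fun i => (norm_nonneg _).trans (hgB i xs)
  have he0 : (0 : ℝ) ≤ ‖x - xs‖ := norm_nonneg _
  -- at the KKT point, the positive part equals `ls i`
  have hstar : ∀ i, max (ρ * g i xs + ls i) 0 = ls i := by
    intro i
    rcases mul_eq_zero.mp (hcomp i) with h | h
    · have h1 : ρ * g i xs ≤ 0 := mul_nonpos_of_nonneg_of_nonpos hρ.le (hgs i)
      rw [h, add_zero, max_eq_right h1]
    · rw [h, mul_zero, zero_add, max_eq_left (hls i)]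
  -- Lipschitz estimate for each `g i` from the gradient bound
  have hgLip : ∀ i, |g i x - g i xs| ≤ B i * ‖x - xs‖ := by
    intro i
    have hf : ∀ y ∈ (Set.univ : Set (EuclideanSpace ℝ (Fin n))),
        HasFDerivWithinAt (g i) ((InnerProductSpace.toDual ℝ _) (g' i y)) Set.univ y :=
      fun y _ => (hg i y).hasFDerivAt.hasFDerivWithinAt
    have hb : ∀ y ∈ (Set.univ : Set (EuclideanSpace ℝ (Fin n))),
        ‖(InnerProductSpace.toDual ℝ _) (g' i y)‖ ≤ B i := fun y _ => by
      simpa using hgB i y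
    have := Convex.norm_image_sub_le_of_norm_hasFDerivWithin_le hf hb convex_univ
      (Set.mem_univ xs) (Set.mem_univ x)
    simpa [Real.norm_eq_abs] using this
  -- decompose the difference
  have hdecomp : (∑ i, max (ρ * g i x + lam i) 0 • g' i x) -
      ∑ i, max (ρ * g i xs + ls i) 0 • g' i xs =
      (∑ i, (max (ρ * g i x + lam i) 0 - ls i) • g' i x) +
        ∑ i, ls i • (g' i x - g' i xs) := by
    rw [← Finset.sum_add_distrib, ← Finset.sum_sub_distrib]
    refine Finset.sum_congr rfl fun i _ => ?_
    rw [hstar i, sub_smul, smul_sub]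
    abel
  rw [hdecomp]
  -- bound the two sums termwise
  have hsum1 : ‖∑ i, (max (ρ * g i x + lam i) 0 - ls i) • g' i x‖ ≤
      ∑ i, (ρ * (B i * ‖x - xs‖) + |lam i - ls i|) * B i := by
    refine (norm_sum_le _ _).trans (Finset.sum_le_sum fun i _ => ?_)
    rw [norm_smul, Real.norm_eq_abs]
    have h1 : |max (ρ * g i x + lam i) 0 - ls i| ≤ ρ * (B i * ‖x - xs‖) + |lam i - ls i| := by
      have h2 : |max (ρ * g i x + lam i) 0 - max (ρ * g i xs + ls i) 0| ≤
          |(ρ * g i x + lam i) - (ρ * g i xs + ls i)| := abs_max_sub_max_le_abs _ _ _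
      rw [hstar i] at h2
      refine h2.trans ?_
      have h3 : (ρ * g i x + lam i) - (ρ * g i xs + ls i) =
          ρ * (g i x - g i xs) + (lam i - ls i) := by ring
      rw [h3]
      refine (abs_add_le _ _).trans ?_
      rw [abs_mul, abs_of_nonneg hρ.le]
      exact add_le_add (by nlinarith [hgLip i]) le_rfl
    exact mul_le_mul h1 (hgB i x) (norm_nonneg _)
      (add_nonneg (mul_nonneg hρ.le (mul_nonneg (hB0 i) he0)) (abs_nonneg _))
  have hsum2 : ‖∑ i, ls i • (g' i x - g' i xs)‖ ≤ ∑ i, ls i * |L i| * ‖x - xs‖ := by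
    refine (norm_sum_le _ _).trans (Finset.sum_le_sum fun i _ => ?_)
    rw [norm_smul, Real.norm_eq_abs, abs_of_nonneg (hls i), mul_assoc]
    refine mul_le_mul_of_nonneg_left ?_ (hls i)
    exact (hgL i x xs).trans (mul_le_mul_of_nonneg_right (le_abs_self _) he0)
  -- evaluate the bounds
  have hBg2 : ∑ i, B i * B i = Bg ^ 2 := by
    rw [hBg, Real.sq_sqrt (Finset.sum_nonneg fun i _ => sq_nonneg _)]
    exact Finset.sum_congr rfl fun i _ => (sq (B i)).symm
  have hcs1 : ∑ i, |lam i - ls i| * B i ≤ ‖lam - ls‖ * Bg := by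
    have h := aux_cauchy_schwarz (fun i => |lam i - ls i|) B
      (fun i => abs_nonneg _) hB0
    have hnorm : ‖lam - ls‖ = Real.sqrt (∑ i, |lam i - ls i| ^ 2) := by
      rw [EuclideanSpace.norm_eq]
      congr 1
    rw [hnorm, hBg]; exact h
  have hcs2 : ∑ i, ls i * |L i| ≤ ‖ls‖ * Lg := by
    have h := aux_cauchy_schwarz (fun i => ls i) (fun i => |L i|) hls
      (fun i => abs_nonneg _)
    have hnorm : ‖ls‖ = Real.sqrt (∑ i, ls i ^ 2) := by
      rw [EuclideanSpace.norm_eq]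
      congr 1; refine Finset.sum_congr rfl fun i _ => ?_
      simp [Real.norm_eq_abs, sq_abs]
    have habs : ∑ i, |L i| ^ 2 = ∑ i, L i ^ 2 :=
      Finset.sum_congr rfl fun i _ => sq_abs _
    rw [hnorm, hLg, ← habs]; exact h
  -- assemble
  have hS1 : ∑ i, (ρ * (B i * ‖x - xs‖) + |lam i - ls i|) * B i ≤
      ρ * Bg ^ 2 * ‖x - xs‖ + ‖lam - ls‖ * Bg := by
    have : ∑ i, (ρ * (B i * ‖x - xs‖) + |lam i - ls i|) * B i =
        ρ * ‖x - xs‖ * ∑ i, B i * B i + ∑ i, |lam i - ls i| * B i := by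
      rw [Finset.mul_sum, ← Finset.sum_add_distrib]
      exact Finset.sum_congr rfl fun i _ => by ring
    rw [this, hBg2]
    exact add_le_add (le_of_eq (by ring)) hcs1
  have hS2 : ∑ i, ls i * |L i| * ‖x - xs‖ ≤ ‖ls‖ * Lg * ‖x - xs‖ := by
    rw [← Finset.sum_mul]
    exact mul_le_mul_of_nonneg_right hcs2 he0
  calc ‖(∑ i, (max (ρ * g i x + lam i) 0 - ls i) • g' i x) +
        ∑ i, ls i • (g' i x - g' i xs)‖
      ≤ ‖∑ i, (max (ρ * g i x + lam i) 0 - ls i) • g' i x‖ +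
        ‖∑ i, ls i • (g' i x - g' i xs)‖ := norm_add_le _ _
    _ ≤ (ρ * Bg ^ 2 * ‖x - xs‖ + ‖lam - ls‖ * Bg) + ‖ls‖ * Lg * ‖x - xs‖ :=
        add_le_add (hsum1.trans hS1) (hsum2.trans hS2)
    _ = θ₁ * ‖x - xs‖ + Bg * ‖lam - ls‖ := by rw [hθ₁]; ring
end

section
/- Let ρ > 0, let f : ℝⁿ → ℝ be differentiable and l-smooth (‖∇f(x) − ∇f(y)‖ ≤ l‖x − y‖ for all x,y), let each g_i : ℝⁿ → ℝ be differentiable with ‖∇g_i(x) − ∇g_i(y)‖ ≤ L_{gi}‖x − y‖ and ‖∇g_i(x)‖ ≤ B_{gi} for all x, y, and let (x*, λ*) satisfy λ* ≥ 0, g(x*) ≤ 0 and λ_i* g_i(x*) = 0 for all i. Let ∇_x L(x,λ) = ∇f(x) + Σ_{i=1}^m [ρ g_i(x)+λ_i]_+ ∇g_i(x). Then for all x ∈ ℝⁿ and λ ∈ ℝ^m, ‖∇_x L(x,λ) − ∇_x L(x*,λ*)‖² ≤ (2l² + 4θ₁²)‖x − x*‖² + 4B_g²‖λ − λ*‖²,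 where B_g = sqrt(Σ_i B_{gi}²), L_g = sqrt(Σ_i L_{gi}²), and θ₁ = ρ B_g² + L_g ‖λ*‖. -/
open InnerProductSpace Finset

/-- Cauchy–Schwarz for finite sums of reals. -/
lemma aux_cs {m : ℕ} (f g : Fin m → ℝ) :
    ∑ i, f i * g i ≤ Real.sqrt (∑ i, (f i) ^ 2) * Real.sqrt (∑ i, (g i) ^ 2) := by
  have h := Finset.sum_mul_sq_le_sq_mul_sq Finset.univ f g
  calc ∑ i, f i * g i ≤ |∑ i, f i * g i| := le_abs_self _
    _ = Real.sqrt ((∑ i, f i * g i) ^ 2) := (Real.sqrt_sq_eq_abs _).symm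
    _ ≤ Real.sqrt ((∑ i, (f i) ^ 2) * ∑ i, (g i) ^ 2) := Real.sqrt_le_sqrt h
    _ = _ := Real.sqrt_mul (Finset.sum_nonneg fun i _ => sq_nonneg _) _

/-- Lipschitz bound from a gradient norm bound. -/
lemma aux_lip {n : ℕ} (F : EuclideanSpace ℝ (Fin n) → ℝ)
    (F' : EuclideanSpace ℝ (Fin n) → EuclideanSpace ℝ (Fin n)) (C : ℝ)
    (h : ∀ x, HasGradientAt F (F' x) x) (hC : ∀ x, ‖F' x‖ ≤ C)
    (x y : EuclideanSpace ℝ (Fin n)) : ‖F x - F y‖ ≤ C * ‖x - y‖ := by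
  have := Convex.norm_image_sub_le_of_norm_hasFDerivWithin_le
    (f := F) (f' := fun z => toDual ℝ _ (F' z)) (C := C) (s := Set.univ)
    (fun z _ => ((hasGradientAt_iff_hasFDerivAt.mp (h z)).hasFDerivWithinAt))
    (fun z _ => by simpa using hC z) convex_univ (Set.mem_univ y) (Set.mem_univ x)
  simpa using this

/-- Bound on the squared difference of `x`-gradients of the augmented Lagrangian:
`‖∇ₓL(x,λ) − ∇ₓL(x*,λ*)‖² ≤ (2l² + 4θ₁²)‖x − x*‖² + 4B_g²‖λ − λ*‖²`. -/
theorem augmented_lagrangian_gradient_x_sq_bound {n m : ℕ} (ρ : ℝ) (hρ : 0 < ρ)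
    (f : EuclideanSpace ℝ (Fin n) → ℝ)
    (f' : EuclideanSpace ℝ (Fin n) → EuclideanSpace ℝ (Fin n)) (l : ℝ)
    (hf : ∀ x, HasGradientAt f (f' x) x)
    (hfl : ∀ x y, ‖f' x - f' y‖ ≤ l * ‖x - y‖)
    (g : Fin m → EuclideanSpace ℝ (Fin n) → ℝ)
    (g' : Fin m → EuclideanSpace ℝ (Fin n) → EuclideanSpace ℝ (Fin n))
    (L B : Fin m → ℝ)
    (hg : ∀ i x, HasGradientAt (g i) (g' i x) x)
    (hgL : ∀ i x y, ‖g' i x - g' i y‖ ≤ L i * ‖x - y‖)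
    (hgB : ∀ i x, ‖g' i x‖ ≤ B i)
    (xs : EuclideanSpace ℝ (Fin n)) (ls : EuclideanSpace ℝ (Fin m))
    (hls : ∀ i, 0 ≤ ls i) (hgs : ∀ i, g i xs ≤ 0) (hcomp : ∀ i, ls i * g i xs = 0)
    (Bg Lg θ₁ : ℝ)
    (hBg : Bg = Real.sqrt (∑ i, (B i) ^ 2)) (hLg : Lg = Real.sqrt (∑ i, (L i) ^ 2))
    (hθ₁ : θ₁ = ρ * Bg ^ 2 + Lg * ‖ls‖) :
    ∀ (x : EuclideanSpace ℝ (Fin n)) (lam : EuclideanSpace ℝ (Fin m)),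
      ‖(f' x + ∑ i, max (ρ * g i x + lam i) 0 • g' i x) -
          (f' xs + ∑ i, max (ρ * g i xs + ls i) 0 • g' i xs)‖ ^ 2 ≤
        (2 * l ^ 2 + 4 * θ₁ ^ 2) * ‖x - xs‖ ^ 2 + 4 * Bg ^ 2 * ‖lam - ls‖ ^ 2 := by
  intro x lam
  set Δx := ‖x - xs‖ with hΔx
  set dl := ‖lam - ls‖ with hdl
  have hΔx0 : 0 ≤ Δx := norm_nonneg _
  have hdl0 : 0 ≤ dl := norm_nonneg _
  have hB0 : ∀ i, 0 ≤ B i := fun i => (norm_nonneg (g' i xs)).trans (hgB i xs)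
  -- at the KKT point, the multiplier simplifies
  have b_eq : ∀ i, max (ρ * g i xs + ls i) 0 = ls i := by
    intro i
    rcases (hls i).eq_or_lt with h | h
    · have : ρ * g i xs ≤ 0 := mul_nonpos_of_nonneg_of_nonpos hρ.le (hgs i)
      simp [← h, max_eq_right, this]
    · have hg0 : g i xs = 0 := by
        have := hcomp i
        rcases mul_eq_zero.mp this with h' | h'
        · exact absurd h' (ne_of_gt h)
        · exact h'
      rw [hg0, mul_zero, zero_add, max_eq_left (hls i)]
  set A : Fin m → ℝ := fun i => max (ρ * g i x + lam i) 0 with hA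
  -- the coefficient difference bound
  have coef_bound : ∀ i, |A i - ls i| ≤ ρ * (B i * Δx) + |lam i - ls i| := by
    intro i
    have hgl : |g i x - g i xs| ≤ B i * Δx := by
      have := aux_lip (g i) (g' i) (B i) (hg i) (hgB i) x xs
      simpa [hΔx] using this
    calc |A i - ls i| = |max (ρ * g i x + lam i) 0 - max (ρ * g i xs + ls i) 0| := by
          rw [b_eq i]
      _ ≤ |(ρ * g i x + lam i) - (ρ * g i xs + ls i)| := abs_max_sub_max_le_abs _ _ _
      _ = |ρ * (g i x - g i xs) + (lam i - ls i)| := by ring_nf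
      _ ≤ |ρ * (g i x - g i xs)| + |lam i - ls i| := abs_add_le _ _
      _ ≤ ρ * (B i * Δx) + |lam i - ls i| := by
          rw [abs_mul, abs_of_pos hρ]
          exact add_le_add (mul_le_mul_of_nonneg_left hgl hρ.le) le_rfl
  -- per-term bound
  have term_bound : ∀ i, ‖A i • g' i x - ls i • g' i xs‖ ≤
      |A i - ls i| * B i + ls i * (L i * Δx) := by
    intro i
    have hsplit : A i • g' i x - ls i • g' i xs
        = (A i - ls i) • g' i x + ls i • (g' i x - g' i xs) := by
      rw [sub_smul, smul_sub]; abel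
    calc ‖A i • g' i x - ls i • g' i xs‖
        ≤ ‖(A i - ls i) • g' i x‖ + ‖ls i • (g' i x - g' i xs)‖ := by
          rw [hsplit]; exact norm_add_le _ _
      _ = |A i - ls i| * ‖g' i x‖ + |ls i| * ‖g' i x - g' i xs‖ := by
          rw [norm_smul, norm_smul, Real.norm_eq_abs, Real.norm_eq_abs]
      _ ≤ |A i - ls i| * B i + ls i * (L i * Δx) := by
          refine add_le_add (mul_le_mul_of_nonneg_left (hgB i x) (abs_nonneg _)) ?_
          rw [abs_of_nonneg (hls i)]
          exact mul_le_mul_of_nonneg_left (hgL i x xs) (hls i)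
  -- main norm bound
  have hD : (f' x + ∑ i, max (ρ * g i x + lam i) 0 • g' i x) -
      (f' xs + ∑ i, max (ρ * g i xs + ls i) 0 • g' i xs)
      = (f' x - f' xs) + ∑ i, (A i • g' i x - ls i • g' i xs) := by
    simp only [b_eq, Finset.sum_sub_distrib, hA]
    abel
  have sumBsq : ∑ i, (B i) ^ 2 = Bg ^ 2 := by
    rw [hBg, Real.sq_sqrt (Finset.sum_nonneg fun i _ => sq_nonneg _)]
  have cs1 : ∑ i, B i * |lam i - ls i| ≤ Bg * dl := by
    have h := aux_cs (fun i => B i) (fun i => |lam i - ls i|)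
    have hn : Real.sqrt (∑ i, |lam i - ls i| ^ 2) = dl := by
      rw [hdl, EuclideanSpace.norm_eq]
      congr 1
    rw [← hBg, hn] at h
    exact h
  have cs2 : ∑ i, ls i * L i ≤ ‖ls‖ * Lg := by
    have h := aux_cs (fun i => ls i) (fun i => L i)
    have hn : Real.sqrt (∑ i, (ls i) ^ 2) = ‖ls‖ := by
      rw [EuclideanSpace.norm_eq]
      congr 1
      refine Finset.sum_congr rfl fun i _ => ?_
      rw [Real.norm_eq_abs, sq_abs]
    rw [hn, ← hLg] at h
    exact h
  have sum_bound : ∑ i, ‖A i • g' i x - ls i • g' i xs‖ ≤ θ₁ * Δx + Bg * dl := by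
    calc ∑ i, ‖A i • g' i x - ls i • g' i xs‖
        ≤ ∑ i, (|A i - ls i| * B i + ls i * (L i * Δx)) :=
          Finset.sum_le_sum fun i _ => term_bound i
      _ ≤ ∑ i, ((ρ * (B i * Δx) + |lam i - ls i|) * B i + ls i * (L i * Δx)) := by
          exact Finset.sum_le_sum fun i _ =>
            add_le_add (mul_le_mul_of_nonneg_right (coef_bound i) (hB0 i)) le_rfl
      _ = ρ * Δx * (∑ i, (B i) ^ 2) + (∑ i, B i * |lam i - ls i|)
            + (∑ i, ls i * L i) * Δx := by
          rw [Finset.mul_sum, Finset.sum_mul, ← Finset.sum_add_distrib,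
            ← Finset.sum_add_distrib]
          exact Finset.sum_congr rfl fun i _ => by ring
      _ ≤ ρ * Δx * Bg ^ 2 + Bg * dl + ‖ls‖ * Lg * Δx :=
          add_le_add (add_le_add (le_of_eq (by rw [sumBsq])) cs1)
            (mul_le_mul_of_nonneg_right cs2 hΔx0)
      _ = θ₁ * Δx + Bg * dl := by rw [hθ₁]; ring
  have main : ‖(f' x + ∑ i, max (ρ * g i x + lam i) 0 • g' i x) -
      (f' xs + ∑ i, max (ρ * g i xs + ls i) 0 • g' i xs)‖ ≤ l * Δx + (θ₁ * Δx + Bg * dl) := by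
    rw [hD]
    calc ‖(f' x - f' xs) + ∑ i, (A i • g' i x - ls i • g' i xs)‖
        ≤ ‖f' x - f' xs‖ + ‖∑ i, (A i • g' i x - ls i • g' i xs)‖ := norm_add_le _ _
      _ ≤ l * Δx + ∑ i, ‖A i • g' i x - ls i • g' i xs‖ :=
          add_le_add (hfl x xs) (norm_sum_le _ _)
      _ ≤ l * Δx + (θ₁ * Δx + Bg * dl) := add_le_add le_rfl sum_bound
  have hnn : (0:ℝ) ≤ ‖(f' x + ∑ i, max (ρ * g i x + lam i) 0 • g' i x) -
      (f' xs + ∑ i, max (ρ * g i xs + ls i) 0 • g' i xs)‖ := norm_nonneg _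
  nlinarith [sq_nonneg (l * Δx - θ₁ * Δx - Bg * dl), sq_nonneg (θ₁ * Δx - Bg * dl),
    mul_self_nonneg (l * Δx + (θ₁ * Δx + Bg * dl))]
end

section
/- Let ρ > 0, let f : ℝⁿ → ℝ be differentiable with quadratic gradient growth at x* with parameter μ > 0 (i.e. ⟨∇f(x) − ∇f(x*), x − x*⟩ ≥ μ‖x − x*‖² for all x ∈ ℝⁿ), let each g_i be convex and differentiable, and let λ, λ* ∈ ℝ^m with λ ≥ 0 and λ* ≥ 0 componentwise. Then for all x ∈ ℝⁿ, ⟨∇_x L(x,λ) − ∇_x L(x*,λ*), x − x*⟩ ≥ μ‖x − x*‖² + (U_ρ(x,λ) − U_ρ(x*,λ)) + (U_ρ(x*,λ*) − U_ρ(x,λ*)), where ∇_x L(x,λ) = ∇f(x) + Σ_{i=1}^m [ρ g_i(x)+λ_i]_+ ∇g_i(x) and U_ρ(x,λ) = Σ_{i=1}^m ([ρ g_i(x)+λ_i]_+² − λ_i²)/(2ρ). -/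
open scoped RealInnerProductSpace

lemma grad_convex_ineq {n : ℕ} {g : EuclideanSpace ℝ (Fin n) → ℝ}
    {v : EuclideanSpace ℝ (Fin n)}
    (hc : ConvexOn ℝ Set.univ g) {x : EuclideanSpace ℝ (Fin n)}
    (hg : HasGradientAt g v x) (y : EuclideanSpace ℝ (Fin n)) :
    g x + ⟪v, y - x⟫ ≤ g y := by
  set φ : ℝ → ℝ := fun t => g (x + t • (y - x)) with hφ
  have hline : ∀ t : ℝ, HasDerivAt (fun t : ℝ => x + t • (y - x)) (y - x) t := by
    intro t
    simpa using ((hasDerivAt_id t).smul_const (y - x)).const_add x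
  have hconv : ConvexOn ℝ Set.univ φ := by
    have h := hc.comp_affineMap (AffineMap.lineMap x y)
    simp only [Set.preimage_univ] at h
    have : φ = g ∘ ⇑(AffineMap.lineMap x y) := by
      funext t
      simp [φ, AffineMap.lineMap_apply, Function.comp, add_comm]
    rw [this]; exact h
  have hgx : HasFDerivAt g ((InnerProductSpace.toDual ℝ _) v) (x + (0:ℝ) • (y - x)) := by
    simpa using hg.hasFDerivAt
  have hderiv : HasDerivAt φ ⟪v, y - x⟫ 0 := by
    have h := hgx.comp_hasDerivAt 0 (hline 0)
    simp at h; exact h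
  have hs := hconv.le_slope_of_hasDerivAt (Set.mem_univ 0) (Set.mem_univ 1)
    one_pos hderiv
  rw [slope_def_field] at hs
  have h0 : φ 0 = g x := by simp [φ]
  have h1 : φ 1 = g y := by simp [φ]
  rw [h0, h1] at hs
  rw [sub_zero, div_one] at hs
  linarith

lemma scalar_ineq (s t : ℝ) : 2 * max s 0 * (t - s) ≤ (max t 0) ^ 2 - (max s 0) ^ 2 := by
  rcases le_or_gt s 0 with h | h
  · rw [max_eq_right h]
    have := sq_nonneg (max t 0)
    nlinarith
  · rw [max_eq_left h.le]
    nlinarith [le_max_left t 0, sq_nonneg (max t 0 - s), le_max_right t 0]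

lemma term_ineq {n : ℕ} (ρ : ℝ) (hρ : 0 < ρ) {g : EuclideanSpace ℝ (Fin n) → ℝ}
    {v : EuclideanSpace ℝ (Fin n)} (hc : ConvexOn ℝ Set.univ g)
    {x : EuclideanSpace ℝ (Fin n)} (hg : HasGradientAt g v x)
    (y : EuclideanSpace ℝ (Fin n)) (lam : ℝ) :
    max (ρ * g x + lam) 0 * ⟪v, y - x⟫ ≤
      ((max (ρ * g y + lam) 0) ^ 2 - lam ^ 2) / (2 * ρ) -
      ((max (ρ * g x + lam) 0) ^ 2 - lam ^ 2) / (2 * ρ) := by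
  have hcv := grad_convex_ineq hc hg y
  set I : ℝ := ⟪v, y - x⟫ with hI
  set c : ℝ := max (ρ * g x + lam) 0 with hcdef
  set T : ℝ := max (ρ * g y + lam) 0 with hT
  have hc0 : 0 ≤ c := le_max_right _ _
  have hsc : 2 * c * ((ρ * g y + lam) - (ρ * g x + lam)) ≤ T ^ 2 - c ^ 2 :=
    scalar_ineq (ρ * g x + lam) (ρ * g y + lam)
  rw [div_sub_div_same, le_div_iff₀ (by positivity)]
  nlinarith [mul_le_mul_of_nonneg_left (show I ≤ g y - g x by linarith) hc0]

/-- Monotonicity-type bound for the `x`-gradient of the augmented Lagrangian: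
if `f` has quadratic gradient growth at `x*` with parameter `μ > 0`, each `gᵢ`
is convex, and `λ, λ* ≥ 0`, then
`⟪∇ₓL(x,λ) − ∇ₓL(x*,λ*), x − x*⟫ ≥ μ‖x − x*‖² + (U(x,λ) − U(x*,λ)) + (U(x*,λ*) − U(x,λ*))`. -/
theorem augmented_lagrangian_gradient_monotone {n m : ℕ} (ρ : ℝ) (hρ : 0 < ρ)
    (f : EuclideanSpace ℝ (Fin n) → ℝ)
    (f' : EuclideanSpace ℝ (Fin n) → EuclideanSpace ℝ (Fin n)) (μ : ℝ) (hμ : 0 < μ)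
    (xs : EuclideanSpace ℝ (Fin n))
    (hf : ∀ x, HasGradientAt f (f' x) x)
    (hqg : ∀ x : EuclideanSpace ℝ (Fin n), μ * ‖x - xs‖ ^ 2 ≤ ⟪f' x - f' xs, x - xs⟫)
    (g : Fin m → EuclideanSpace ℝ (Fin n) → ℝ)
    (g' : Fin m → EuclideanSpace ℝ (Fin n) → EuclideanSpace ℝ (Fin n))
    (hgconv : ∀ i, ConvexOn ℝ Set.univ (g i))
    (hg : ∀ i x, HasGradientAt (g i) (g' i x) x)
    (lam ls : EuclideanSpace ℝ (Fin m))
    (hlam : ∀ i, 0 ≤ lam i) (hls : ∀ i, 0 ≤ ls i)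
    (U : EuclideanSpace ℝ (Fin n) → EuclideanSpace ℝ (Fin m) → ℝ)
    (hU : ∀ x μ', U x μ' = ∑ i, ((max (ρ * g i x + μ' i) 0) ^ 2 - (μ' i) ^ 2) / (2 * ρ)) :
    ∀ x : EuclideanSpace ℝ (Fin n),
      ⟪(f' x + ∑ i, max (ρ * g i x + lam i) 0 • g' i x) -
          (f' xs + ∑ i, max (ρ * g i xs + ls i) 0 • g' i xs), x - xs⟫ ≥
        μ * ‖x - xs‖ ^ 2 + (U x lam - U xs lam) + (U xs ls - U x ls) := by
  intro x
  have expand : ⟪(f' x + ∑ i, max (ρ * g i x + lam i) 0 • g' i x) -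
          (f' xs + ∑ i, max (ρ * g i xs + ls i) 0 • g' i xs), x - xs⟫ =
      ⟪f' x - f' xs, x - xs⟫ +
        ∑ i, max (ρ * g i x + lam i) 0 * ⟪g' i x, x - xs⟫ -
        ∑ i, max (ρ * g i xs + ls i) 0 * ⟪g' i xs, x - xs⟫ := by
    simp only [inner_sub_left, inner_add_left, sum_inner, real_inner_smul_left]
    ring
  have h1 : ∑ i, (((max (ρ * g i x + lam i) 0) ^ 2 - (lam i) ^ 2) / (2 * ρ) -
        ((max (ρ * g i xs + lam i) 0) ^ 2 - (lam i) ^ 2) / (2 * ρ)) ≤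
      ∑ i, max (ρ * g i x + lam i) 0 * ⟪g' i x, x - xs⟫ := by
    refine Finset.sum_le_sum fun i _ => ?_
    have := term_ineq ρ hρ (hgconv i) (hg i x) xs (lam i)
    have hneg : (⟪g' i x, xs - x⟫ : ℝ) = - ⟪g' i x, x - xs⟫ := by
      rw [show xs - x = -(x - xs) by abel, inner_neg_right]
    rw [hneg] at this
    nlinarith [this]
  have h2 : ∑ i, max (ρ * g i xs + ls i) 0 * ⟪g' i xs, x - xs⟫ ≤
      ∑ i, (((max (ρ * g i x + ls i) 0) ^ 2 - (ls i) ^ 2) / (2 * ρ) -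
        ((max (ρ * g i xs + ls i) 0) ^ 2 - (ls i) ^ 2) / (2 * ρ)) :=
    Finset.sum_le_sum fun i _ => term_ineq ρ hρ (hgconv i) (hg i xs) x (ls i)
  have hUx : U x lam - U xs lam = ∑ i, (((max (ρ * g i x + lam i) 0) ^ 2 - (lam i) ^ 2) / (2 * ρ) -
        ((max (ρ * g i xs + lam i) 0) ^ 2 - (lam i) ^ 2) / (2 * ρ)) := by
    rw [hU, hU, ← Finset.sum_sub_distrib]
  have hUs : U x ls - U xs ls = ∑ i, (((max (ρ * g i x + ls i) 0) ^ 2 - (ls i) ^ 2) / (2 * ρ) -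
        ((max (ρ * g i xs + ls i) 0) ^ 2 - (ls i) ^ 2) / (2 * ρ)) := by
    rw [hU, hU, ← Finset.sum_sub_distrib]
  have := hqg x
  rw [ge_iff_le, expand]
  linarith [h1, h2, hUx, hUs]
end

section
/- Let ρ > 0, let each g_i : ℝⁿ → ℝ be differentiable with ‖∇g_i(x)‖ ≤ B_{gi} for all x (so that |g_i(x) − g_i(y)| ≤ B_{gi}‖x−y‖), and let (x*, λ*) satisfy λ* ≥ 0, g(x*) ≤ 0 and λ_i* g_i(x*) = 0 for all i (so that [ρ g_i(x*)+λ_i*]_+ = λ_i* for all i). Then for all x ∈ ℝⁿ and λ ∈ ℝ^m, Σ_{i=1}^m ( ([ρ g_i(x)+λ_i]_+ − λ_i)/ρ )² ≤ 2B_g²‖x − x*‖² + (2/ρ²)‖λ − λ*‖², where B_g = sqrt(Σ_{i=1}^m B_{gi}²) and [t]_+ = max(t,0). -/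
/-- Bound on the squared norm of the `λ`-gradient of the augmented penalty at a
KKT-type point: `Σᵢ (([ρgᵢ(x)+λᵢ]₊ − λᵢ)/ρ)² ≤ 2B_g²‖x − x*‖² + (2/ρ²)‖λ − λ*‖²`. -/
theorem augmented_penalty_gradient_lam_sq_bound {n m : ℕ} (ρ : ℝ) (hρ : 0 < ρ)
    (g : Fin m → EuclideanSpace ℝ (Fin n) → ℝ)
    (g' : Fin m → EuclideanSpace ℝ (Fin n) → EuclideanSpace ℝ (Fin n))
    (B : Fin m → ℝ)
    (hg : ∀ i x, HasGradientAt (g i) (g' i x) x)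
    (hgB : ∀ i x, ‖g' i x‖ ≤ B i)
    (xs : EuclideanSpace ℝ (Fin n)) (ls : EuclideanSpace ℝ (Fin m))
    (hls : ∀ i, 0 ≤ ls i) (hgs : ∀ i, g i xs ≤ 0) (hcomp : ∀ i, ls i * g i xs = 0)
    (Bg : ℝ) (hBg : Bg = Real.sqrt (∑ i, (B i) ^ 2)) :
    ∀ (x : EuclideanSpace ℝ (Fin n)) (lam : EuclideanSpace ℝ (Fin m)),
      ∑ i, ((max (ρ * g i x + lam i) 0 - lam i) / ρ) ^ 2 ≤
        2 * Bg ^ 2 * ‖x - xs‖ ^ 2 + (2 / ρ ^ 2) * ‖lam - ls‖ ^ 2 := by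
  intro x lam
  -- Lipschitz bound for each g i
  have hlip : ∀ i, |g i x - g i xs| ≤ B i * ‖x - xs‖ := by
    intro i
    have hconv : Convex ℝ (Set.univ : Set (EuclideanSpace ℝ (Fin n))) := convex_univ
    have := hconv.norm_image_sub_le_of_norm_hasFDerivWithin_le
      (f := g i) (f' := fun y => (InnerProductSpace.toDual ℝ _) (g' i y)) (C := B i)
      (fun y _ => ((hg i y).hasFDerivAt).hasFDerivWithinAt)
      (fun y _ => by simpa using hgB i y) (Set.mem_univ xs) (Set.mem_univ x)
    simpa [Real.norm_eq_abs] using this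
  have hB0 : ∀ i, 0 ≤ B i := fun i => le_trans (norm_nonneg _) (hgB i x)
  -- pointwise bound
  have key : ∀ i, ((max (ρ * g i x + lam i) 0 - lam i) / ρ) ^ 2 ≤
      2 * (B i) ^ 2 * ‖x - xs‖ ^ 2 + (2 / ρ ^ 2) * (lam i - ls i) ^ 2 := by
    intro i
    have h1 : max (ρ * g i x + lam i) 0 - lam i = max (ρ * g i x) (-lam i) := by
      rcases le_total (ρ * g i x) (-lam i) with h | h
      · rw [max_eq_right h, max_eq_right (by linarith)]; ring
      · rw [max_eq_left h, max_eq_left (by linarith)]; ring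
    have h0 : max (ρ * g i xs) (-ls i) = 0 := by
      rcases mul_eq_zero.mp (hcomp i) with h | h
      · rw [h, neg_zero, max_eq_right (mul_nonpos_of_nonneg_of_nonpos hρ.le (hgs i))]
      · rw [h, mul_zero, max_eq_left (neg_nonpos.mpr (hls i))]
    have habs : |max (ρ * g i x) (-lam i) - max (ρ * g i xs) (-ls i)| ≤
        max |ρ * g i x - ρ * g i xs| |(-lam i) - (-ls i)| :=
      abs_max_sub_max_le_max _ _ _ _
    rw [h1]
    have hM : |max (ρ * g i x) (-lam i)| ≤ max (ρ * |g i x - g i xs|) |lam i - ls i| := by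
      rw [← sub_zero (max (ρ * g i x) (-lam i)), ← h0]
      refine habs.trans (max_le_max ?_ ?_)
      · rw [← mul_sub, abs_mul, abs_of_pos hρ]
      · have he : (-lam i) - (-ls i) = -(lam i - ls i) := by ring
        rw [he, abs_neg]
    have hsq : (max (ρ * g i x) (-lam i)) ^ 2 ≤
        (ρ * |g i x - g i xs|) ^ 2 + (lam i - ls i) ^ 2 := by
      have h3 : (max (ρ * |g i x - g i xs|) |lam i - ls i|) ^ 2 ≤
          (ρ * |g i x - g i xs|) ^ 2 + (lam i - ls i) ^ 2 := by
        rcases max_cases (ρ * |g i x - g i xs|) |lam i - ls i| with ⟨he, _⟩ | ⟨he, _⟩ <;>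
          rw [he] <;> [skip; rw [sq_abs]] <;>
          [exact le_add_of_nonneg_right (sq_nonneg _);
           exact le_add_of_nonneg_left (sq_nonneg _)]
      calc (max (ρ * g i x) (-lam i)) ^ 2 = |max (ρ * g i x) (-lam i)| ^ 2 := (sq_abs _).symm
        _ ≤ (max (ρ * |g i x - g i xs|) |lam i - ls i|) ^ 2 :=
            pow_le_pow_left₀ (abs_nonneg _) hM 2
        _ ≤ _ := h3
    have hg2 : (g i x - g i xs) ^ 2 ≤ (B i) ^ 2 * ‖x - xs‖ ^ 2 := by
      nlinarith [hlip i, abs_nonneg (g i x - g i xs), sq_abs (g i x - g i xs),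
        mul_nonneg (hB0 i) (norm_nonneg (x - xs))]
    have hρ2 : (0:ℝ) < ρ ^ 2 := by positivity
    rw [div_pow, div_le_iff₀ hρ2]
    have h2 : (ρ * |g i x - g i xs|) ^ 2 = ρ ^ 2 * (g i x - g i xs) ^ 2 := by
      rw [mul_pow, sq_abs]
    have heq : (2 * (B i) ^ 2 * ‖x - xs‖ ^ 2 + (2 / ρ ^ 2) * (lam i - ls i) ^ 2) * ρ ^ 2 =
        2 * ρ ^ 2 * ((B i) ^ 2 * ‖x - xs‖ ^ 2) + 2 * (lam i - ls i) ^ 2 := by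
      field_simp
    rw [heq]
    have hg2' : ρ ^ 2 * (g i x - g i xs) ^ 2 ≤ ρ ^ 2 * ((B i) ^ 2 * ‖x - xs‖ ^ 2) :=
      mul_le_mul_of_nonneg_left hg2 hρ2.le
    have hpos : 0 ≤ ρ ^ 2 * ((B i) ^ 2 * ‖x - xs‖ ^ 2) := by positivity
    rw [h2] at hsq
    linarith [sq_nonneg (lam i - ls i)]
  calc ∑ i, ((max (ρ * g i x + lam i) 0 - lam i) / ρ) ^ 2
      ≤ ∑ i, (2 * (B i) ^ 2 * ‖x - xs‖ ^ 2 + (2 / ρ ^ 2) * (lam i - ls i) ^ 2) :=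
        Finset.sum_le_sum fun i _ => key i
    _ = 2 * (∑ i, (B i) ^ 2) * ‖x - xs‖ ^ 2 + (2 / ρ ^ 2) * ∑ i, (lam i - ls i) ^ 2 := by
        rw [Finset.sum_add_distrib, ← Finset.sum_mul, ← Finset.mul_sum, ← Finset.mul_sum]
    _ = 2 * Bg ^ 2 * ‖x - xs‖ ^ 2 + (2 / ρ ^ 2) * ‖lam - ls‖ ^ 2 := by
        have h1 : Bg ^ 2 = ∑ i, (B i) ^ 2 := by
          rw [hBg, Real.sq_sqrt (Finset.sum_nonneg fun i _ => sq_nonneg _)]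
        have h2 : ‖lam - ls‖ ^ 2 = ∑ i, (lam i - ls i) ^ 2 := by
          rw [EuclideanSpace.norm_eq, Real.sq_sqrt (Finset.sum_nonneg fun i _ => sq_nonneg _)]
          exact Finset.sum_congr rfl fun i _ => by
            simp only [PiLp.sub_apply, Real.norm_eq_abs, sq_abs]
        rw [h1, h2]
end

section
/- Under the hypotheses: ρ > 0, α > 0; each g_i : ℝⁿ → ℝ differentiable with ‖∇g_i(x)‖ ≤ B_{gi} for all x; and (x*, λ*) satisfying λ* ≥ 0, g(x*) ≤ 0 and λ_i* g_i(x*) = 0 for all i — the dual update λ_{k+1} = λ_k + (α/ρ)·([ρ g(x_k) + λ_k]_+ − λ_k) (componentwise) satisfies, for any x_k ∈ ℝⁿ and λ_k ∈ ℝ^m, ‖λ_{k+1} − λ*‖² ≤ (1 + 2α²/ρ²)‖λ_k − λ*‖² + 2B_g²α²‖x_k − x*‖² + 2α(U_ρ(x_k,λ_k) − U_ρ(x_k,λ*)), where B_g = sqrt(Σ_i B_{gi}²) and U_ρ(x,λ) = Σ_{i=1}^m ([ρ g_i(x)+λ_i]_+² − λ_i²)/(2ρ). -/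
open InnerProductSpace

private lemma esq {m : ℕ} (v : EuclideanSpace ℝ (Fin m)) : ‖v‖ ^ 2 = ∑ i, (v i) ^ 2 := by
  rw [EuclideanSpace.norm_eq, Real.sq_sqrt (by positivity)]
  simp [Real.norm_eq_abs, sq_abs]

private lemma conc (c s t : ℝ) :
    (max (c + s) 0) ^ 2 - s ^ 2 ≤
      (max (c + t) 0) ^ 2 - t ^ 2 + 2 * (max (c + t) 0 - t) * (s - t) := by
  rcases le_or_gt (c + s) 0 with h | h
  · rw [max_eq_right h]
    nlinarith [le_max_left (c + t) 0, le_max_right (c + t) 0,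
      sq_nonneg (max (c + t) 0 + s - t)]
  · rw [max_eq_left h.le]
    have ha : c + t ≤ max (c + t) 0 := le_max_left _ _
    nlinarith [mul_nonneg (by linarith : (0:ℝ) ≤ max (c+t) 0 + s - t + (c + s))
      (by linarith : (0:ℝ) ≤ max (c+t) 0 + s - t - (c + s))]

/-- One-step estimate for the dual update of Aug-PDG:
`‖λ_{k+1} − λ*‖² ≤ (1 + 2α²/ρ²)‖λ_k − λ*‖² + 2B_g²α²‖x_k − x*‖²
  + 2α(U(x_k,λ_k) − U(x_k,λ*))`. -/
theorem augPDG_dual_step_bound {n m : ℕ} (ρ α : ℝ) (hρ : 0 < ρ) (hα : 0 < α)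
    (g : Fin m → EuclideanSpace ℝ (Fin n) → ℝ)
    (g' : Fin m → EuclideanSpace ℝ (Fin n) → EuclideanSpace ℝ (Fin n))
    (B : Fin m → ℝ)
    (hg : ∀ i x, HasGradientAt (g i) (g' i x) x)
    (hgB : ∀ i x, ‖g' i x‖ ≤ B i)
    (xs : EuclideanSpace ℝ (Fin n)) (ls : EuclideanSpace ℝ (Fin m))
    (hls : ∀ i, 0 ≤ ls i) (hgs : ∀ i, g i xs ≤ 0) (hcomp : ∀ i, ls i * g i xs = 0)
    (Bg : ℝ) (hBg : Bg = Real.sqrt (∑ i, (B i) ^ 2))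
    (U : EuclideanSpace ℝ (Fin n) → EuclideanSpace ℝ (Fin m) → ℝ)
    (hU : ∀ x μ', U x μ' = ∑ i, ((max (ρ * g i x + μ' i) 0) ^ 2 - (μ' i) ^ 2) / (2 * ρ))
    (xk : EuclideanSpace ℝ (Fin n)) (lamk lamk1 : EuclideanSpace ℝ (Fin m))
    (hupd : ∀ i, lamk1 i = lamk i + (α / ρ) * (max (ρ * g i xk + lamk i) 0 - lamk i)) :
    ‖lamk1 - ls‖ ^ 2 ≤
      (1 + 2 * α ^ 2 / ρ ^ 2) * ‖lamk - ls‖ ^ 2 + 2 * Bg ^ 2 * α ^ 2 * ‖xk - xs‖ ^ 2 +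
        2 * α * (U xk lamk - U xk ls) := by
  have hρ0 : ρ ≠ 0 := ne_of_gt hρ
  set N : ℝ := ‖xk - xs‖ with hN
  have hN0 : 0 ≤ N := norm_nonneg _
  set d : Fin m → ℝ := fun i => max (ρ * g i xk + lamk i) 0 - lamk i with hd
  -- mean value inequality
  have hmvt : ∀ i, |g i xk - g i xs| ≤ B i * N := by
    intro i
    have h1 : ∀ x ∈ (Set.univ : Set (EuclideanSpace ℝ (Fin n))),
        HasFDerivWithinAt (g i) ((toDual ℝ _) (g' i x)) Set.univ x :=
      fun x _ => ((hg i x).hasFDerivAt).hasFDerivWithinAt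
    have h2 : ∀ x ∈ (Set.univ : Set (EuclideanSpace ℝ (Fin n))),
        ‖(toDual ℝ _) (g' i x)‖ ≤ B i := fun x _ => by
      rw [LinearIsometryEquiv.norm_map]; exact hgB i x
    have := convex_univ.norm_image_sub_le_of_norm_hasFDerivWithin_le h1 h2
      (Set.mem_univ xs) (Set.mem_univ xk)
    simpa [Real.norm_eq_abs] using this
  have hBnn : ∀ i, 0 ≤ B i := fun i => le_trans (norm_nonneg _) (hgB i xs)
  -- per-coordinate bound on d
  have hdB : ∀ i, (d i) ^ 2 ≤ 2 * (lamk i - ls i) ^ 2 + 2 * ρ ^ 2 * (B i) ^ 2 * N ^ 2 := by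
    intro i
    have hstar : max (ρ * g i xs) (-(ls i)) = 0 := by
      rcases eq_or_lt_of_le (hls i) with h0 | h0
      · rw [← h0]
        simp only [neg_zero]
        exact max_eq_right (by nlinarith [hgs i])
      · have hg0 : g i xs = 0 := by
          rcases mul_eq_zero.mp (hcomp i) with h | h
          · exact absurd h (ne_of_gt h0)
          · exact h
        rw [hg0, mul_zero]
        exact max_eq_left (by linarith)
    have hdi : d i = max (ρ * g i xk) (-(lamk i)) - max (ρ * g i xs) (-(ls i)) := by
      rw [hstar, sub_zero, hd]
      simp only [← max_sub_sub_right (ρ * g i xk + lamk i) 0 (lamk i)]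
      ring_nf
    have habs : |d i| ≤ |ρ * g i xk - ρ * g i xs| + |(-(lamk i)) - (-(ls i))| := by
      rw [hdi]
      exact le_trans (abs_max_sub_max_le_max _ _ _ _) (max_le_add_of_nonneg (abs_nonneg _) (abs_nonneg _))
    have h1 : |ρ * g i xk - ρ * g i xs| = ρ * |g i xk - g i xs| := by
      rw [show ρ * g i xk - ρ * g i xs = ρ * (g i xk - g i xs) by ring, abs_mul,
        abs_of_pos hρ]
    have h2 : |(-(lamk i)) - (-(ls i))| = |lamk i - ls i| := by
      rw [← abs_neg]; ring_nf
    have hgi := hmvt i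
    have h3 : |d i| ≤ ρ * (B i * N) + |lamk i - ls i| := by
      rw [h1, h2] at habs
      nlinarith [hmvt i, abs_nonneg (g i xk - g i xs)]
    have h4 : d i ^ 2 ≤ (ρ * (B i * N) + |lamk i - ls i|) ^ 2 := by
      rw [← sq_abs (d i)]
      exact pow_le_pow_left₀ (abs_nonneg _) h3 2
    nlinarith [sq_nonneg (ρ * (B i * N) - |lamk i - ls i|), sq_abs (lamk i - ls i)]
  -- concavity bound
  have hA : ∑ i, d i * (lamk i - ls i) ≤ ρ * (U xk lamk - U xk ls) := by
    rw [hU, hU, ← Finset.sum_sub_distrib, Finset.mul_sum]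
    apply Finset.sum_le_sum
    intro i _
    have h := conc (ρ * g i xk) (ls i) (lamk i)
    have he : ρ * (((max (ρ * g i xk + lamk i) 0) ^ 2 - (lamk i) ^ 2) / (2 * ρ) -
        ((max (ρ * g i xk + ls i) 0) ^ 2 - (ls i) ^ 2) / (2 * ρ)) =
        (((max (ρ * g i xk + lamk i) 0) ^ 2 - (lamk i) ^ 2) -
          ((max (ρ * g i xk + ls i) 0) ^ 2 - (ls i) ^ 2)) / 2 := by
      field_simp
    rw [he, hd]
    linarith
  -- expand the norm
  have hexp : ‖lamk1 - ls‖ ^ 2 = (∑ i, (lamk i - ls i) ^ 2)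
      + 2 * (α / ρ) * (∑ i, d i * (lamk i - ls i)) + (α / ρ) ^ 2 * (∑ i, (d i) ^ 2) := by
    rw [esq]
    have : ∀ i, ((lamk1 - ls) i) ^ 2 = (lamk i - ls i) ^ 2
        + 2 * (α / ρ) * (d i * (lamk i - ls i)) + (α / ρ) ^ 2 * (d i) ^ 2 := by
      intro i
      have : (lamk1 - ls) i = lamk1 i - ls i := rfl
      rw [this, hupd i, hd]; ring
    rw [Finset.sum_congr rfl (fun i _ => this i), Finset.sum_add_distrib,
      Finset.sum_add_distrib, ← Finset.mul_sum, ← Finset.mul_sum]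
  have hS1 : ‖lamk - ls‖ ^ 2 = ∑ i, (lamk i - ls i) ^ 2 := by
    rw [esq]; rfl
  have hBg2 : Bg ^ 2 = ∑ i, (B i) ^ 2 := by
    rw [hBg, Real.sq_sqrt (by positivity)]
  -- sum the d bound
  have hSd : (∑ i, (d i) ^ 2) ≤ 2 * (∑ i, (lamk i - ls i) ^ 2) + 2 * ρ ^ 2 * (Bg ^ 2) * N ^ 2 := by
    calc (∑ i, (d i) ^ 2) ≤ ∑ i, (2 * (lamk i - ls i) ^ 2 + 2 * ρ ^ 2 * (B i) ^ 2 * N ^ 2) :=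
          Finset.sum_le_sum (fun i _ => hdB i)
      _ = 2 * (∑ i, (lamk i - ls i) ^ 2) + 2 * ρ ^ 2 * (Bg ^ 2) * N ^ 2 := by
          have h2' : (∑ i, 2 * ρ ^ 2 * (B i) ^ 2 * N ^ 2) = 2 * ρ ^ 2 * (Bg ^ 2) * N ^ 2 := by
            rw [hBg2, Finset.mul_sum, Finset.sum_mul]
          rw [Finset.sum_add_distrib, ← Finset.mul_sum, h2']
  -- assemble
  have e1 : 2 * (α / ρ) * (∑ i, d i * (lamk i - ls i)) ≤ 2 * α * (U xk lamk - U xk ls) := by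
    have h := mul_le_mul_of_nonneg_left hA (le_of_lt (div_pos hα hρ))
    have he : (α / ρ) * (ρ * (U xk lamk - U xk ls)) = α * (U xk lamk - U xk ls) := by
      field_simp
      try ring
    linarith [h, he]
  have e2 : (α / ρ) ^ 2 * (∑ i, (d i) ^ 2) ≤
      2 * α ^ 2 / ρ ^ 2 * (∑ i, (lamk i - ls i) ^ 2) + 2 * Bg ^ 2 * α ^ 2 * N ^ 2 := by
    have h := mul_le_mul_of_nonneg_left hSd (sq_nonneg (α / ρ))
    have he : (α / ρ) ^ 2 * (2 * (∑ i, (lamk i - ls i) ^ 2) + 2 * ρ ^ 2 * (Bg ^ 2) * N ^ 2) =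
        2 * α ^ 2 / ρ ^ 2 * (∑ i, (lamk i - ls i) ^ 2) + 2 * Bg ^ 2 * α ^ 2 * N ^ 2 := by
      field_simp
      try ring
    linarith [h, he]
  rw [hexp, hS1]
  linarith [e1, e2]
end
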